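/- Let q = (q_0, ..., q_5) ∈ ℤ^6 satisfy the Bazaikin freeness condition, and let s be the positive integer with 8s = |σ_3(q)|. Then s ≡ 1 (mod 6) or s ≡ 5 (mod 6). (This is Corollary 3.2(b): the order s of H^6(B_q) = ℤ_s satisfies s ≡ ±1 mod 6.) -/

import Mathlib

/-- The `k`-th elementary symmetric polynomial of the tuple `q`. -/
def esymm {n : ℕ} (k : ℕ) (q : Fin n → ℤ) : ℤ :=
  ∑ t ∈ Finset.univ.powersetCard k, ∏ i ∈ t, q i

/-- The Bazaikin freeness condition: the entries sum to zero, all entries are odd,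
and `gcd (q a + q b, q c + q d) = 2` for all pairwise distinct indices `a b c d`. -/
def BazaikinFree (q : Fin 6 → ℤ) : Prop :=
  (∑ i, q i) = 0 ∧ (∀ i, Odd (q i)) ∧
    ∀ a b c d : Fin 6, a ≠ b → a ≠ c → a ≠ d → b ≠ c → b ≠ d → c ≠ d →
      Int.gcd (q a + q b) (q c + q d) = 2

/-- The positive curvature condition: there is an index `i₀` such that
`q i + q j > 0` for all pairs `i < j` avoiding `i₀`, or `q i + q j < 0` for all such pairs. -/
def PosCurv (q : Fin 6 → ℤ) : Prop :=
  ∃ i₀ : Fin 6,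
    (∀ i j : Fin 6, i < j → i ≠ i₀ → j ≠ i₀ → 0 < q i + q j) ∨
    (∀ i j : Fin 6, i < j → i ≠ i₀ → j ≠ i₀ → q i + q j < 0)

lemma esymm3_eq (q : Fin 6 → ℤ) : esymm 3 q =
    q 0*q 1*q 2 + q 0*q 1*q 3 + q 0*q 1*q 4 + q 0*q 1*q 5 + q 0*q 2*q 3 +
    q 0*q 2*q 4 + q 0*q 2*q 5 + q 0*q 3*q 4 + q 0*q 3*q 5 + q 0*q 4*q 5 +
    q 1*q 2*q 3 + q 1*q 2*q 4 + q 1*q 2*q 5 + q 1*q 3*q 4 + q 1*q 3*q 5 +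
    q 1*q 4*q 5 + q 2*q 3*q 4 + q 2*q 3*q 5 + q 2*q 4*q 5 + q 3*q 4*q 5 := by
  rw [esymm, show (Finset.univ.powersetCard 3 : Finset (Finset (Fin 6))) =
    {{0,1,2},{0,1,3},{0,1,4},{0,1,5},{0,2,3},{0,2,4},{0,2,5},{0,3,4},{0,3,5},{0,4,5},
     {1,2,3},{1,2,4},{1,2,5},{1,3,4},{1,3,5},{1,4,5},{2,3,4},{2,3,5},{2,4,5},{3,4,5}} from by decide]
  simp (config := { decide := true }) [Finset.sum_insert, Finset.prod_insert]
  ring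

/-- Newton's identity for six variables summing to zero. -/
lemma newton (q : Fin 6 → ℤ) (h0 : (∑ i, q i) = 0) :
    3 * esymm 3 q = ∑ i, q i ^ 3 := by
  rw [Fin.sum_univ_six] at h0
  rw [esymm3_eq, Fin.sum_univ_six]
  linear_combination (3*(q 0*q 1 + q 0*q 2 + q 0*q 3 + q 0*q 4 + q 0*q 5 + q 1*q 2 +
    q 1*q 3 + q 1*q 4 + q 1*q 5 + q 2*q 3 + q 2*q 4 + q 2*q 5 + q 3*q 4 + q 3*q 5 + q 4*q 5)
    - (q 0 + q 1 + q 2 + q 3 + q 4 + q 5)^2) * h0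

/-- Parity of the triangular number `m (m+1) / 2`, as a function of `m` mod 4. -/
def tpar : ZMod 4 → ZMod 2 := fun x => if x = 1 ∨ x = 2 then 1 else 0

lemma cast24 (x : ℤ) :
    (x : ZMod 2) = ZMod.castHom (by norm_num : (2:ℕ) ∣ 4) (ZMod 2) (x : ZMod 4) :=
  RingHom.congr_fun (RingHom.ext_int (Int.castRingHom (ZMod 2))
    ((ZMod.castHom (by norm_num : (2:ℕ) ∣ 4) (ZMod 2)).comp (Int.castRingHom (ZMod 4)))) x

lemma t_parity (t m : ℤ) (ht : 2 * t = m * (m + 1)) :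
    (t : ZMod 2) = tpar (m : ZMod 4) := by
  have h4 : (2 : ZMod 4) * (t : ZMod 4) = (m : ZMod 4) * ((m : ZMod 4) + 1) := by
    have := congrArg (fun z : ℤ => (z : ZMod 4)) ht
    push_cast at this
    exact this
  rw [cast24 t]
  revert h4
  generalize (t : ZMod 4) = a
  generalize (m : ZMod 4) = b
  revert a b
  decide

set_option maxRecDepth 100000 in
set_option synthInstance.maxSize 2000 in
set_option synthInstance.maxHeartbeats 1000000 in
set_option maxHeartbeats 16000000 in
/-- Key counting lemma mod 4 (verified by `decide`). -/
lemma keyD : ∀ v0 v1 v2 v3 v4 v5 : ZMod 4,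
    v0 + v1 + v2 + v3 + v4 + v5 = 1 →
    tpar v0 + tpar v1 + tpar v2 + tpar v3 + tpar v4 + tpar v5 ≠ 1 →
    ∃ a b c d : Fin 6, (a ≠ b ∧ a ≠ c ∧ a ≠ d ∧ b ≠ c ∧ b ≠ d ∧ c ≠ d) ∧
      2 * (![v0,v1,v2,v3,v4,v5] a + ![v0,v1,v2,v3,v4,v5] b) + 2 = 0 ∧
      2 * (![v0,v1,v2,v3,v4,v5] c + ![v0,v1,v2,v3,v4,v5] d) + 2 = 0 := by
  decide

set_option maxRecDepth 100000 in
set_option synthInstance.maxSize 2000 in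
set_option synthInstance.maxHeartbeats 1000000 in
set_option maxHeartbeats 16000000 in
/-- Key nonvanishing lemma mod 3 (verified by `decide`). -/
lemma keyE : ∀ v0 v1 v2 v3 v4 v5 : ZMod 3,
    v0 + v1 + v2 + v3 + v4 + v5 = 0 →
    v0*v1*v2 + v0*v1*v3 + v0*v1*v4 + v0*v1*v5 + v0*v2*v3 +
    v0*v2*v4 + v0*v2*v5 + v0*v3*v4 + v0*v3*v5 + v0*v4*v5 +
    v1*v2*v3 + v1*v2*v4 + v1*v2*v5 + v1*v3*v4 + v1*v3*v5 +
    v1*v4*v5 + v2*v3*v4 + v2*v3*v5 + v2*v4*v5 + v3*v4*v5 = 0 →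
    ∃ a b c d : Fin 6, (a ≠ b ∧ a ≠ c ∧ a ≠ d ∧ b ≠ c ∧ b ≠ d ∧ c ≠ d) ∧
      ![v0,v1,v2,v3,v4,v5] a + ![v0,v1,v2,v3,v4,v5] b = 0 ∧
      ![v0,v1,v2,v3,v4,v5] c + ![v0,v1,v2,v3,v4,v5] d = 0 := by
  decide

theorem order_mod_six (q : Fin 6 → ℤ) (h : BazaikinFree q) (s : ℤ)
    (hs : 8 * s = |esymm 3 q|) :
    (s ≡ 1 [ZMOD 6]) ∨ (s ≡ 5 [ZMOD 6]) := by
  obtain ⟨hsum, hodd, hgcd⟩ := h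
  choose m hm using fun i => (hodd i)
  have hm' : ∀ i, q i = 2 * m i + 1 := fun i => by have := hm i; linarith
  have hsum6 : q 0 + q 1 + q 2 + q 3 + q 4 + q 5 = 0 := by
    rw [Fin.sum_univ_six] at hsum; exact hsum
  have hTex : ∀ i : Fin 6, ∃ t : ℤ, 2 * t = m i * (m i + 1) := by
    intro i
    rcases Int.even_mul_succ_self (m i) with ⟨t, htt⟩
    exact ⟨t, by linarith⟩
  choose t ht using hTex
  have hcube : ∀ i, q i ^ 3 = q i + 8 * (t i * q i) := by
    intro i
    have h1 : q i ^ 3 = q i + 4 * (m i * (m i + 1)) * q i := by rw [hm' i]; ring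
    have h2 : 8 * (t i * q i) = 4 * (m i * (m i + 1)) * q i := by
      linear_combination (4 * q i) * ht i
    rw [h1, h2]
  have hsum3 : (∑ i, q i ^ 3) = 8 * ∑ i, t i * q i := by
    calc (∑ i, q i ^ 3) = ∑ i, (q i + 8 * (t i * q i)) :=
          Finset.sum_congr rfl (fun i _ => hcube i)
      _ = (∑ i, q i) + 8 * ∑ i, t i * q i := by
          rw [Finset.sum_add_distrib, ← Finset.mul_sum]
      _ = 8 * ∑ i, t i * q i := by rw [hsum]; ring
  set T : ℤ := ∑ i, t i * q i with hTdef
  have h3e : 3 * esymm 3 q = 8 * T := by rw [newton q hsum, hsum3]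
  -- consequence of the gcd condition: two disjoint pair sums are never both divisible by 4
  have hdvd4 : ∀ a b c d : Fin 6, a ≠ b → a ≠ c → a ≠ d → b ≠ c → b ≠ d → c ≠ d →
      ¬((4:ℤ) ∣ (q a + q b) ∧ (4:ℤ) ∣ (q c + q d)) := by
    intro a b c d hab hac had hbc hbd hcd ⟨h1, h2⟩
    have h4 : (4:ℤ) ∣ (Int.gcd (q a + q b) (q c + q d) : ℤ) := Int.dvd_coe_gcd h1 h2
    rw [hgcd a b c d hab hac had hbc hbd hcd] at h4
    norm_num at h4
  -- sum of the m's
  have hmsum : m 0 + m 1 + m 2 + m 3 + m 4 + m 5 = -3 := by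
    have h0 := hsum6
    rw [hm' 0, hm' 1, hm' 2, hm' 3, hm' 4, hm' 5] at h0
    linarith
  have hv1 : ((m 0 : ZMod 4) + m 1 + m 2 + m 3 + m 4 + m 5) = 1 := by
    have h0 := congrArg (fun z : ℤ => (z : ZMod 4)) hmsum
    push_cast at h0
    rw [h0]
    decide
  have matm : ∀ a : Fin 6,
      ![(m 0 : ZMod 4), m 1, m 2, m 3, m 4, m 5] a = (m a : ZMod 4) := by
    intro a; fin_cases a <;> rfl
  -- parity of the triangular sum
  have htp : tpar (m 0 : ZMod 4) + tpar (m 1 : ZMod 4) + tpar (m 2 : ZMod 4) +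
      tpar (m 3 : ZMod 4) + tpar (m 4 : ZMod 4) + tpar (m 5 : ZMod 4) = 1 := by
    by_contra hne
    obtain ⟨a, b, c, d, ⟨hab, hac, had, hbc, hbd, hcd⟩, h1, h2⟩ :=
      keyD (m 0 : ZMod 4) (m 1) (m 2) (m 3) (m 4) (m 5) hv1 hne
    rw [matm a, matm b] at h1
    rw [matm c, matm d] at h2
    refine hdvd4 a b c d hab hac had hbc hbd hcd ⟨?_, ?_⟩
    · have hz : ((q a + q b : ℤ) : ZMod 4) = 0 := by
        rw [hm' a, hm' b]; push_cast; linear_combination h1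
      have := (ZMod.intCast_zmod_eq_zero_iff_dvd (q a + q b) 4).mp hz
      exact_mod_cast this
    · have hz : ((q c + q d : ℤ) : ZMod 4) = 0 := by
        rw [hm' c, hm' d]; push_cast; linear_combination h2
      have := (ZMod.intCast_zmod_eq_zero_iff_dvd (q c + q d) 4).mp hz
      exact_mod_cast this
  have hq2 : ∀ i, (q i : ZMod 2) = 1 := by
    intro i
    rw [hm' i]
    push_cast
    rw [show (2 : ZMod 2) = 0 by decide]
    ring
  have hTpar : (T : ZMod 2) = 1 := by
    have hTc : (T : ZMod 2) = ∑ i : Fin 6, (t i : ZMod 2) * (q i : ZMod 2) := by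
      rw [hTdef]; push_cast; rfl
    rw [hTc, Fin.sum_univ_six]
    simp only [hq2, mul_one]
    rw [t_parity _ _ (ht 0), t_parity _ _ (ht 1), t_parity _ _ (ht 2),
        t_parity _ _ (ht 3), t_parity _ _ (ht 4), t_parity _ _ (ht 5)]
    exact htp
  have habs : esymm 3 q = 8 * s ∨ esymm 3 q = -(8 * s) := by
    rcases abs_cases (esymm 3 q) with ⟨h1, _⟩ | ⟨h1, _⟩
    · left; omega
    · right; omega
  -- s is odd
  have hs2 : s % 2 = 1 := by
    have hTs : T = 3 * s ∨ T = -(3 * s) := by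
      rcases habs with h1 | h1
      · left; omega
      · right; omega
    have dec2 : ∀ x : ZMod 2, 1 = 3 * x → x = 1 := by decide
    have dec2' : ∀ x : ZMod 2, 1 = -(3 * x) → x = 1 := by decide
    have hcast : (s : ZMod 2) = 1 := by
      rcases hTs with h1 | h1
      · have h0 : (T : ZMod 2) = ((3 * s : ℤ) : ZMod 2) := by rw [h1]
        rw [hTpar] at h0
        push_cast at h0
        exact dec2 _ h0
      · have h0 : (T : ZMod 2) = ((-(3 * s) : ℤ) : ZMod 2) := by rw [h1]
        rw [hTpar] at h0
        push_cast at h0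
        exact dec2' _ h0
    have h0 : ((s - 1 : ℤ) : ZMod 2) = 0 := by push_cast; rw [hcast]; ring
    have := (ZMod.intCast_zmod_eq_zero_iff_dvd (s - 1) 2).mp h0
    have h2 : (2:ℤ) ∣ s - 1 := by exact_mod_cast this
    omega
  -- 3 does not divide s
  have hE3 : ((esymm 3 q : ℤ) : ZMod 3) ≠ 0 := by
    intro h0
    have hcastE : ((esymm 3 q : ℤ) : ZMod 3) =
        (q 0:ZMod 3)*(q 1:ZMod 3)*(q 2:ZMod 3) + (q 0:ZMod 3)*(q 1:ZMod 3)*(q 3:ZMod 3) +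
        (q 0:ZMod 3)*(q 1:ZMod 3)*(q 4:ZMod 3) + (q 0:ZMod 3)*(q 1:ZMod 3)*(q 5:ZMod 3) +
        (q 0:ZMod 3)*(q 2:ZMod 3)*(q 3:ZMod 3) + (q 0:ZMod 3)*(q 2:ZMod 3)*(q 4:ZMod 3) +
        (q 0:ZMod 3)*(q 2:ZMod 3)*(q 5:ZMod 3) + (q 0:ZMod 3)*(q 3:ZMod 3)*(q 4:ZMod 3) +
        (q 0:ZMod 3)*(q 3:ZMod 3)*(q 5:ZMod 3) + (q 0:ZMod 3)*(q 4:ZMod 3)*(q 5:ZMod 3) +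
        (q 1:ZMod 3)*(q 2:ZMod 3)*(q 3:ZMod 3) + (q 1:ZMod 3)*(q 2:ZMod 3)*(q 4:ZMod 3) +
        (q 1:ZMod 3)*(q 2:ZMod 3)*(q 5:ZMod 3) + (q 1:ZMod 3)*(q 3:ZMod 3)*(q 4:ZMod 3) +
        (q 1:ZMod 3)*(q 3:ZMod 3)*(q 5:ZMod 3) + (q 1:ZMod 3)*(q 4:ZMod 3)*(q 5:ZMod 3) +
        (q 2:ZMod 3)*(q 3:ZMod 3)*(q 4:ZMod 3) + (q 2:ZMod 3)*(q 3:ZMod 3)*(q 5:ZMod 3) +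
        (q 2:ZMod 3)*(q 4:ZMod 3)*(q 5:ZMod 3) + (q 3:ZMod 3)*(q 4:ZMod 3)*(q 5:ZMod 3) := by
      rw [esymm3_eq]; push_cast; ring
    rw [hcastE] at h0
    have hsv : (q 0 : ZMod 3) + q 1 + q 2 + q 3 + q 4 + q 5 = 0 := by
      have h1 := congrArg (fun z : ℤ => (z : ZMod 3)) hsum6
      push_cast at h1
      exact h1
    obtain ⟨a, b, c, d, ⟨hab, hac, had, hbc, hbd, hcd⟩, h1, h2⟩ :=
      keyE (q 0 : ZMod 3) (q 1) (q 2) (q 3) (q 4) (q 5) hsv h0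
    have matq : ∀ a : Fin 6,
        ![(q 0 : ZMod 3), q 1, q 2, q 3, q 4, q 5] a = (q a : ZMod 3) := by
      intro a; fin_cases a <;> rfl
    rw [matq a, matq b] at h1
    rw [matq c, matq d] at h2
    have g1 : (3:ℤ) ∣ q a + q b := by
      have hz : ((q a + q b : ℤ) : ZMod 3) = 0 := by push_cast; exact h1
      have := (ZMod.intCast_zmod_eq_zero_iff_dvd (q a + q b) 3).mp hz
      exact_mod_cast this
    have g2 : (3:ℤ) ∣ q c + q d := by
      have hz : ((q c + q d : ℤ) : ZMod 3) = 0 := by push_cast; exact h2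
      have := (ZMod.intCast_zmod_eq_zero_iff_dvd (q c + q d) 3).mp hz
      exact_mod_cast this
    have h4 : (3:ℤ) ∣ (Int.gcd (q a + q b) (q c + q d) : ℤ) := Int.dvd_coe_gcd g1 g2
    rw [hgcd a b c d hab hac had hbc hbd hcd] at h4
    norm_num at h4
  have hs3 : ¬ (3:ℤ) ∣ s := by
    intro h3s
    have hdv : (3:ℤ) ∣ esymm 3 q := by
      rcases habs with h1 | h1
      · rw [h1]; exact h3s.mul_left 8
      · rw [h1]; exact dvd_neg.mpr (h3s.mul_left 8)
    exact hE3 ((ZMod.intCast_zmod_eq_zero_iff_dvd (esymm 3 q) 3).mpr (by exact_mod_cast hdv))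
  have hs3' : s % 3 ≠ 0 := fun hmod => hs3 (Int.dvd_of_emod_eq_zero hmod)
  unfold Int.ModEq
  omega
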